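/- Let X be a compact Hausdorff space, let A be a unital C*-algebra, and let η : C(X, ℂ) → A be a unital *-homomorphism whose range lies in the center of A. For x ∈ X let I_x denote the smallest closed two-sided ideal of A containing {η(f) : f ∈ C(X, ℂ), f(x) = 0}. Assume: (i) for every a ∈ A the function x ↦ dist(a, I_x) is continuous on X; (ii) I_x ≠ A for every x ∈ X; (iii) for every x ∈ X the only closed two-sided ideals of A containing I_x are I_x and A. Let h : X → X be a minimal homeomorphism and let α be a *-automorphism of A such that α(η(f)) = η(f ∘ h⁻¹) for all f ∈ C(X, ℂ). Then the only closed two-sided ideals B of A with α(B) = B are {0} and A. -/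

import Mathlib

namespace AlphaSimpleAux

variable {A : Type*} [CStarAlgebra A] [PartialOrder A] [StarOrderedRing A]

lemma pair_le (r x y : A) :
    star x * (star r * r) * y + star y * (star r * r) * x ≤
      star x * (star r * r) * x + star y * (star r * r) * y := by
  have h := star_mul_self_nonneg (r * x - r * y)
  have e : star (r * x - r * y) * (r * x - r * y)
      = (star x * (star r * r) * x + star y * (star r * r) * y)
        - (star x * (star r * r) * y + star y * (star r * r) * x) := by
    simp only [star_sub, star_mul]
    noncomm_ring
  rw [e] at h
  exact sub_nonneg.mp h

lemma half_le {a b : A} (h : a + a ≤ b + b) : a ≤ b := by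
  have h2 : (0 : A) ≤ (b - a) + (b - a) := by
    have := sub_nonneg.mpr h
    calc (0:A) ≤ b + b - (a + a) := this
    _ = (b - a) + (b - a) := by abel
  have h3 : (0 : A) ≤ (2:ℝ) • (b - a) := by rw [two_smul]; exact h2
  have h4 : (0 : A) ≤ (2⁻¹:ℝ) • ((2:ℝ) • (b - a)) := smul_nonneg (by norm_num) h3
  rw [smul_smul] at h4
  norm_num at h4
  exact h4

lemma double_sum_le {ι : Type*} (u : Finset ι) (F G : ι → ι → A)
    (hp : ∀ j ∈ u, ∀ k ∈ u, F j k + F k j ≤ G j k + G k j) :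
    ∑ j ∈ u, ∑ k ∈ u, F j k ≤ ∑ j ∈ u, ∑ k ∈ u, G j k := by
  apply half_le
  have commF : ∑ j ∈ u, ∑ k ∈ u, F k j = ∑ j ∈ u, ∑ k ∈ u, F j k := Finset.sum_comm
  have commG : ∑ j ∈ u, ∑ k ∈ u, G k j = ∑ j ∈ u, ∑ k ∈ u, G j k := Finset.sum_comm
  have e1 : (∑ j ∈ u, ∑ k ∈ u, F j k) + (∑ j ∈ u, ∑ k ∈ u, F j k)
      = ∑ j ∈ u, ∑ k ∈ u, (F j k + F k j) := by
    simp only [Finset.sum_add_distrib, commF]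
  have e2 : (∑ j ∈ u, ∑ k ∈ u, G j k) + (∑ j ∈ u, ∑ k ∈ u, G j k)
      = ∑ j ∈ u, ∑ k ∈ u, (G j k + G k j) := by
    simp only [Finset.sum_add_distrib, commG]
  rw [e1, e2]
  exact Finset.sum_le_sum fun j hj => Finset.sum_le_sum fun k hk => hp j hj k hk

lemma sum3_le (r x y z : A) :
    star (x + y + z) * (star r * r) * (x + y + z) ≤
      (star x * (star r * r) * x + star y * (star r * r) * y + star z * (star r * r) * z) +
      (star x * (star r * r) * x + star y * (star r * r) * y + star z * (star r * r) * z) +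
      (star x * (star r * r) * x + star y * (star r * r) * y + star z * (star r * r) * z) := by
  have e : star (x + y + z) * (star r * r) * (x + y + z)
      = (star x * (star r * r) * x + star y * (star r * r) * y + star z * (star r * r) * z)
        + ((star x * (star r * r) * y + star y * (star r * r) * x)
          + (star x * (star r * r) * z + star z * (star r * r) * x)
          + (star y * (star r * r) * z + star z * (star r * r) * y)) := by
    simp only [star_add]
    noncomm_ring
  rw [e]
  have h1 := pair_le r x y
  have h2 := pair_le r x z
  have h3 := pair_le r y z
  calc _ ≤ (star x * (star r * r) * x + star y * (star r * r) * y + star z * (star r * r) * z)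
        + ((star x * (star r * r) * x + star y * (star r * r) * y)
          + (star x * (star r * r) * x + star z * (star r * r) * z)
          + (star y * (star r * r) * y + star z * (star r * r) * z)) := by
          exact add_le_add le_rfl (add_le_add (add_le_add h1 h2) h3)
    _ = _ := by abel

lemma norm_le_of_sq_le (m : A) (c : ℝ) (hc : 0 ≤ c) (h : star m * m ≤ (c * c) • (1:A)) :
    ‖m‖ ≤ c := by
  rcases subsingleton_or_nontrivial A with hS | hN
  · simpa [Subsingleton.elim m 0] using hc
  · have h1 : ‖star m * m‖ ≤ ‖(c * c) • (1:A)‖ :=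
      CStarAlgebra.norm_le_norm_of_nonneg_of_le (star_mul_self_nonneg m) h
    rw [norm_smul, norm_one, Real.norm_eq_abs, abs_of_nonneg (mul_nonneg hc hc), mul_one,
      CStarRing.norm_star_mul_self] at h1
    nlinarith [norm_nonneg m]

end AlphaSimpleAux

namespace AlphaSimpleAux2

variable {X : Type*} [TopologicalSpace X]

/-- coerce a real-valued continuous map to a complex-valued one -/
noncomputable def oc (u : C(X, ℝ)) : C(X, ℂ) :=
  ⟨fun y => (u y : ℂ), Complex.continuous_ofReal.comp u.continuous⟩

@[simp] lemma oc_apply (u : C(X, ℝ)) (y : X) : oc u y = (u y : ℂ) := rfl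

lemma star_oc (u : C(X, ℝ)) : star (oc u) = oc u := by
  ext y
  simp [Complex.conj_ofReal]

lemma oc_add (u v : C(X, ℝ)) : oc (u + v) = oc u + oc v := by
  ext y; push_cast; simp

lemma oc_sub (u v : C(X, ℝ)) : oc (u - v) = oc u - oc v := by
  ext y; push_cast; simp

lemma oc_mul (u v : C(X, ℝ)) : oc (u * v) = oc u * oc v := by
  ext y; push_cast; simp

lemma oc_one : oc (1 : C(X, ℝ)) = 1 := by
  ext y; simp

/-- square root of a continuous nonnegative function -/
noncomputable def sqC (u : C(X, ℝ)) : C(X, ℝ) :=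
  ⟨fun y => Real.sqrt (u y), Real.continuous_sqrt.comp u.continuous⟩

@[simp] lemma sqC_apply (u : C(X, ℝ)) (y : X) : sqC u y = Real.sqrt (u y) := rfl

lemma sqC_mul_self (u : C(X, ℝ)) (hu : ∀ y, 0 ≤ u y) : sqC u * sqC u = u := by
  ext y; simpa using Real.mul_self_sqrt (hu y)

section eta

variable {A : Type*} [CStarAlgebra A] (η : C(X, ℂ) →⋆ₐ[ℂ] A)

lemma etar_star (u : C(X, ℝ)) : star (η (oc u)) = η (oc u) := by
  rw [← map_star, star_oc]

lemma etar_mul (u v : C(X, ℝ)) : η (oc u) * η (oc v) = η (oc (u * v)) := by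
  rw [← map_mul, oc_mul]

lemma etar_sq (u : C(X, ℝ)) (hu : ∀ y, 0 ≤ u y) :
    star (η (oc (sqC u))) * η (oc (sqC u)) = η (oc u) := by
  rw [etar_star, etar_mul, sqC_mul_self u hu]

lemma etar_smul (r : ℝ) (u : C(X, ℝ)) : η (oc (r • u)) = r • η (oc u) := by
  have : oc (r • u) = (r : ℂ) • oc u := by
    ext y; push_cast; simp [Complex.real_smul]
  rw [this, map_smul]
  rw [← algebraMap_smul ℂ r (η (oc u)), Complex.coe_algebraMap]

variable [PartialOrder A] [StarOrderedRing A]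

lemma etar_nonneg (u : C(X, ℝ)) (hu : ∀ y, 0 ≤ u y) : 0 ≤ η (oc u) := by
  rw [← etar_sq η u hu]
  exact star_mul_self_nonneg _

lemma etar_mono {u v : C(X, ℝ)} (huv : ∀ y, u y ≤ v y) : η (oc u) ≤ η (oc v) := by
  have h : 0 ≤ η (oc (v - u)) := etar_nonneg η _ fun y => by
    simpa using sub_nonneg.mpr (huv y)
  rw [oc_sub, map_sub] at h
  exact sub_nonneg.mp h

lemma etar_conj_le (hcentral : ∀ (f : C(X, ℂ)) (a : A), η f * a = a * η f)
    (u : C(X, ℝ)) (hu : ∀ y, 0 ≤ u y) (d : A) :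
    star d * η (oc u) * d ≤ η (oc ((‖d‖ * ‖d‖) • u)) := by
  set r := η (oc (sqC u)) with hr
  have hrs : star r * r = η (oc u) := etar_sq η u hu
  have hcomm : ∀ a : A, r * a = a * r := fun a => hcentral _ a
  have e : star d * η (oc u) * d = star r * (star d * d) * r := by
    rw [← hrs, etar_star]
    calc star d * (r * r) * d = star d * (r * (r * d)) := by noncomm_ring
      _ = star d * (r * (d * r)) := by rw [hcomm d]
      _ = star d * ((r * d) * r) := by noncomm_ring
      _ = star d * ((d * r) * r) := by rw [hcomm d]
      _ = (star d * d) * (r * r) := by noncomm_ring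
      _ = r * ((star d * d) * r) := by rw [hcomm ((star d * d) * r)]; noncomm_ring
      _ = r * (star d * d) * r := by noncomm_ring
  rw [e]
  have h1 : star d * d ≤ algebraMap ℝ A ‖star d * d‖ :=
    IsSelfAdjoint.le_algebraMap_norm_self (IsSelfAdjoint.star_mul_self d)
  have h2 : star r * (star d * d) * r ≤ star r * algebraMap ℝ A ‖star d * d‖ * r :=
    star_left_conjugate_le_conjugate h1 r
  refine h2.trans ?_
  rw [CStarRing.norm_star_mul_self, Algebra.algebraMap_eq_smul_one, etar_smul]
  rw [mul_smul_comm, smul_mul_assoc, mul_one, hrs]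

end eta

end AlphaSimpleAux2

namespace AlphaSimpleAux2

open AlphaSimpleAux

variable {X : Type*} [TopologicalSpace X]
variable {A : Type*} [CStarAlgebra A] (η : C(X, ℂ) →⋆ₐ[ℂ] A)

/-- generators of the fiber ideal -/
def genSet (x : X) : Set A := {a | ∃ (f : C(X, ℂ)) (d : A), f x = 0 ∧ a = η f * d}

lemma gen_mul_left (hcentral : ∀ (f : C(X, ℂ)) (a : A), η f * a = a * η f) (x : X)
    (c : A) {z : A} (hz : z ∈ (AddSubgroup.closure (genSet η x) : Set A)) :
    c * z ∈ (AddSubgroup.closure (genSet η x) : Set A) := by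
  simp only [SetLike.mem_coe] at hz ⊢
  induction hz using AddSubgroup.closure_induction with
  | mem s hs =>
    obtain ⟨f, d, hf, rfl⟩ := hs
    refine AddSubgroup.subset_closure ⟨f, c * d, hf, ?_⟩
    rw [← mul_assoc, ← hcentral f c, mul_assoc]
  | zero => simpa using AddSubgroup.zero_mem _
  | add a b _ _ ha hb => simpa [mul_add] using AddSubgroup.add_mem _ ha hb
  | neg a _ ha => simpa using AddSubgroup.neg_mem _ ha

lemma gen_mul_right (x : X)
    (c : A) {z : A} (hz : z ∈ (AddSubgroup.closure (genSet η x) : Set A)) :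
    z * c ∈ (AddSubgroup.closure (genSet η x) : Set A) := by
  simp only [SetLike.mem_coe] at hz ⊢
  induction hz using AddSubgroup.closure_induction with
  | mem s hs =>
    obtain ⟨f, d, hf, rfl⟩ := hs
    exact AddSubgroup.subset_closure ⟨f, d * c, hf, by rw [mul_assoc]⟩
  | zero => simpa using AddSubgroup.zero_mem _
  | add a b _ _ ha hb => simpa [add_mul] using AddSubgroup.add_mem _ ha hb
  | neg a _ ha => simpa using AddSubgroup.neg_mem _ ha

lemma Ix_subset_closure_gen (hcentral : ∀ (f : C(X, ℂ)) (a : A), η f * a = a * η f)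
    (I : X → TwoSidedIdeal A)
    (hIsmallest : ∀ x, ∀ K : TwoSidedIdeal A, IsClosed (K : Set A) →
      (∀ f : C(X, ℂ), f x = 0 → η f ∈ K) → I x ≤ K) (x : X) :
    (I x : Set A) ⊆ closure (AddSubgroup.closure (genSet η x) : Set A) := by
  set G := AddSubgroup.closure (genSet η x) with hG
  let K : TwoSidedIdeal A := TwoSidedIdeal.mk' (closure (G : Set A))
    (subset_closure (AddSubgroup.zero_mem G))
    (fun ha hb => map_mem_closure₂ continuous_add ha hb fun a ha b hb => G.add_mem ha hb)
    (fun ha => map_mem_closure continuous_neg ha fun a ha => G.neg_mem ha)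
    (fun {c y} hy => map_mem_closure (continuous_mul_left c) hy
      fun z hz => gen_mul_left η hcentral x c hz)
    (fun {y c} hy => map_mem_closure (f := fun z => z * c) (continuous_mul_right c) hy
      fun z hz => gen_mul_right η x c hz)
  have hKc : IsClosed (K : Set A) := by
    rw [TwoSidedIdeal.coe_mk']; exact isClosed_closure
  have hKgen : ∀ f : C(X, ℂ), f x = 0 → η f ∈ K := by
    intro f hf
    rw [TwoSidedIdeal.mem_mk']
    exact subset_closure (AddSubgroup.subset_closure ⟨f, 1, hf, (mul_one _).symm⟩)
  have hle := hIsmallest x K hKc hKgen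
  intro a ha
  have := hle ha
  rwa [TwoSidedIdeal.mem_mk'] at this

variable [PartialOrder A] [StarOrderedRing A]

/-- The key local estimate for elements of the additive span of the generators. -/
lemma gen_local_estimate (hcentral : ∀ (f : C(X, ℂ)) (a : A), η f * a = a * η f) (x : X)
    {s : A} (hs : s ∈ AddSubgroup.closure (genSet η x)) :
    ∀ δ : ℝ, 0 < δ → ∃ U : Set X, IsOpen U ∧ x ∈ U ∧
      ∀ g : C(X, ℝ), (∀ y, 0 ≤ g y) → (∀ y, y ∉ U → g y = 0) →
        star s * η (oc g) * s ≤ η (oc (δ • g)) := by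
  induction hs using AddSubgroup.closure_induction with
  | mem s hsmem =>
    obtain ⟨f, d, hf, rfl⟩ := hsmem
    intro δ hδ
    refine ⟨{y | Complex.normSq (f y) * (‖d‖ * ‖d‖) < δ}, ?_, ?_, ?_⟩
    · exact isOpen_lt (((Complex.continuous_normSq).comp f.continuous).mul continuous_const)
        continuous_const
    · simp [hf, hδ]
    · intro g hg0 hgsupp
      -- star (η f * d) * η (oc g) * (η f * d) = star d * η (star f * oc g * f) * d
      have e1 : star (η f * d) * η (oc g) * (η f * d)
          = star d * η (star f * oc g * f) * d := by
        rw [star_mul, ← map_star, map_mul, map_mul]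
        noncomm_ring
      set w : C(X, ℝ) := ⟨fun y => Complex.normSq (f y) * g y,
        ((Complex.continuous_normSq).comp f.continuous).mul g.continuous⟩ with hw
      have e2 : star f * oc g * f = oc w := by
        ext y
        simp only [ContinuousMap.mul_apply, ContinuousMap.star_apply, oc_apply,
          ContinuousMap.coe_mk]
        push_cast
        rw [mul_comm (star (f y)) ((g y : ℂ)), mul_assoc,
          show star (f y) * f y = ((Complex.normSq (f y) : ℝ) : ℂ) from
            (Complex.normSq_eq_conj_mul_self).symm ▸ rfl]
        rw [hw]
        simp only [ContinuousMap.coe_mk]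
        push_cast
        ring
      have hw0 : ∀ y, 0 ≤ w y := fun y =>
        mul_nonneg (Complex.normSq_nonneg _) (hg0 y)
      have h3 := etar_conj_le η hcentral w hw0 d
      have h4 : η (oc ((‖d‖ * ‖d‖) • w)) ≤ η (oc (δ • g)) := by
        apply etar_mono
        intro y
        simp only [ContinuousMap.smul_apply, smul_eq_mul, ContinuousMap.coe_mk]
        by_cases hy : g y = 0
        · simp [hw, hy]
        · have hyU : Complex.normSq (f y) * (‖d‖ * ‖d‖) < δ := by
            by_contra hnot
            exact hy (hgsupp y (by simpa using hnot))
          have := mul_le_mul_of_nonneg_right hyU.le (hg0 y)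
          calc ‖d‖ * ‖d‖ * (Complex.normSq (f y) * g y)
              = Complex.normSq (f y) * (‖d‖ * ‖d‖) * g y := by ring
            _ ≤ δ * g y := this
      rw [e1, e2]
      exact h3.trans h4
  | zero =>
    intro δ hδ
    refine ⟨Set.univ, isOpen_univ, Set.mem_univ x, fun g hg0 _ => ?_⟩
    simpa using etar_nonneg η (δ • g) fun y => by
      simpa using mul_nonneg hδ.le (hg0 y)
  | neg s _ ih =>
    intro δ hδ
    obtain ⟨U, hUo, hxU, hb⟩ := ih δ hδ
    exact ⟨U, hUo, hxU, fun g hg0 hgsupp => by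
      simpa using hb g hg0 hgsupp⟩
  | add s₁ s₂ _ _ ih₁ ih₂ =>
    intro δ hδ
    obtain ⟨U₁, hU₁o, hxU₁, hb₁⟩ := ih₁ (δ/4) (by linarith)
    obtain ⟨U₂, hU₂o, hxU₂, hb₂⟩ := ih₂ (δ/4) (by linarith)
    refine ⟨U₁ ∩ U₂, hU₁o.inter hU₂o, ⟨hxU₁, hxU₂⟩, ?_⟩
    intro g hg0 hgsupp
    have hgs₁ : ∀ y, y ∉ U₁ → g y = 0 := fun y hy =>
      hgsupp y fun hmem => hy hmem.1
    have hgs₂ : ∀ y, y ∉ U₂ → g y = 0 := fun y hy =>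
      hgsupp y fun hmem => hy hmem.2
    have h₁ := hb₁ g hg0 hgs₁
    have h₂ := hb₂ g hg0 hgs₂
    set r := η (oc (sqC g)) with hr
    have hrs : star r * r = η (oc g) := etar_sq η g hg0
    have expand : star (s₁ + s₂) * η (oc g) * (s₁ + s₂)
        = (star s₁ * η (oc g) * s₁ + star s₂ * η (oc g) * s₂)
          + (star s₁ * η (oc g) * s₂ + star s₂ * η (oc g) * s₁) := by
      simp only [star_add]
      noncomm_ring
    have hcross : star s₁ * η (oc g) * s₂ + star s₂ * η (oc g) * s₁
        ≤ star s₁ * η (oc g) * s₁ + star s₂ * η (oc g) * s₂ := by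
      rw [← hrs]
      exact pair_le r s₁ s₂
    have hmerge : η (oc ((δ/4) • g)) + η (oc ((δ/4) • g))
        + (η (oc ((δ/4) • g)) + η (oc ((δ/4) • g))) = η (oc (δ • g)) := by
      rw [← map_add, ← map_add, ← oc_add, ← oc_add]
      congr 1
      ext y
      simp only [oc_apply, ContinuousMap.add_apply, ContinuousMap.smul_apply, smul_eq_mul]
      push_cast
      ring
    calc star (s₁ + s₂) * η (oc g) * (s₁ + s₂)
        ≤ (star s₁ * η (oc g) * s₁ + star s₂ * η (oc g) * s₂)
          + (star s₁ * η (oc g) * s₁ + star s₂ * η (oc g) * s₂) := by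
          rw [expand]; exact add_le_add le_rfl hcross
      _ ≤ (η (oc ((δ/4) • g)) + η (oc ((δ/4) • g)))
          + (η (oc ((δ/4) • g)) + η (oc ((δ/4) • g))) :=
          add_le_add (add_le_add h₁ h₂) (add_le_add h₁ h₂)
      _ = η (oc (δ • g)) := hmerge

end AlphaSimpleAux2

namespace AlphaSimpleAux2

open AlphaSimpleAux

variable {X : Type*} [TopologicalSpace X] [CompactSpace X] [T2Space X]
variable {A : Type*} [CStarAlgebra A] [PartialOrder A] [StarOrderedRing A]

lemma key (η : C(X, ℂ) →⋆ₐ[ℂ] A)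
    (hcentral : ∀ (f : C(X, ℂ)) (a : A), η f * a = a * η f)
    (I : X → TwoSidedIdeal A)
    (hIsmallest : ∀ x, ∀ K : TwoSidedIdeal A, IsClosed (K : Set A) →
      (∀ f : C(X, ℂ), f x = 0 → η f ∈ K) → I x ≤ K)
    (B : TwoSidedIdeal A) (hB : IsClosed (B : Set A)) (a : A)
    (ha : ∀ x : X, a ∈ closure {y : A | ∃ b ∈ B, ∃ c ∈ I x, y = b + c}) :
    a ∈ B := by
  suffices H : ∀ ε : ℝ, 0 < ε → ∃ b ∈ B, ‖a - b‖ ≤ ε by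
    have hcl : a ∈ closure (B : Set A) := by
      rw [Metric.mem_closure_iff]
      intro ε hε
      obtain ⟨b, hbB, hab⟩ := H (ε/2) (by linarith)
      exact ⟨b, hbB, by rw [dist_eq_norm]; linarith⟩
    rwa [hB.closure_eq] at hcl
  intro ε hε
  have hε3 : 0 < ε/3 := by linarith
  have step : ∀ x : X, ∃ (b : A) (U : Set X), b ∈ B ∧ IsOpen U ∧ x ∈ U ∧
      ∀ g : C(X,ℝ), (∀ y, 0 ≤ g y) → (∀ y, y ∉ U → g y = 0) →
        star (a - b) * η (oc g) * (a - b) ≤ η (oc ((ε*ε) • g)) := by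
    intro x
    obtain ⟨yy, hyy, hdy⟩ := Metric.mem_closure_iff.mp (ha x) (ε/3) hε3
    obtain ⟨b, hbB, c, hcI, rfl⟩ := hyy
    have hcG : c ∈ closure (AddSubgroup.closure (genSet η x) : Set A) :=
      Ix_subset_closure_gen η hcentral I hIsmallest x hcI
    obtain ⟨s, hsG, hds⟩ := Metric.mem_closure_iff.mp hcG (ε/3) hε3
    rw [SetLike.mem_coe] at hsG
    obtain ⟨U, hUo, hxU, hbound⟩ :=
      gen_local_estimate η hcentral x hsG ((ε/3)*(ε/3)) (by positivity)
    refine ⟨b, U, hbB, hUo, hxU, ?_⟩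
    intro g hg0 hgsupp
    have hdecomp : a - b = (a - (b + c)) + (c - s) + s := by abel
    set r := η (oc (sqC g)) with hr
    have hrs : star r * r = η (oc g) := etar_sq η g hg0
    have hd₁ : ‖a - (b + c)‖ ≤ ε/3 := by rw [← dist_eq_norm]; exact hdy.le
    have hd₂ : ‖c - s‖ ≤ ε/3 := by rw [← dist_eq_norm]; exact hds.le
    have keybnd : ∀ d : A, ‖d‖ ≤ ε/3 →
        star d * η (oc g) * d ≤ η (oc (((ε/3)*(ε/3)) • g)) := by
      intro d hd
      refine (etar_conj_le η hcentral g hg0 d).trans (etar_mono η ?_)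
      intro y
      simp only [ContinuousMap.smul_apply, smul_eq_mul]
      have hdd : ‖d‖ * ‖d‖ ≤ (ε/3) * (ε/3) :=
        mul_le_mul hd hd (norm_nonneg _) hε3.le
      exact mul_le_mul_of_nonneg_right hdd (hg0 y)
    have key1 := keybnd _ hd₁
    have key2 := keybnd _ hd₂
    have key3 := hbound g hg0 hgsupp
    rw [hdecomp]
    have hsum3 := sum3_le r (a - (b + c)) (c - s) s
    rw [hrs] at hsum3
    refine hsum3.trans ?_
    have hQ : η (oc (((ε/3)*(ε/3)) • g)) + η (oc (((ε/3)*(ε/3)) • g))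
        + η (oc (((ε/3)*(ε/3)) • g)) + (η (oc (((ε/3)*(ε/3)) • g))
        + η (oc (((ε/3)*(ε/3)) • g)) + η (oc (((ε/3)*(ε/3)) • g)))
        + (η (oc (((ε/3)*(ε/3)) • g)) + η (oc (((ε/3)*(ε/3)) • g))
        + η (oc (((ε/3)*(ε/3)) • g))) = η (oc ((ε*ε) • g)) := by
      simp only [← map_add, ← oc_add]
      congr 1
      ext y
      simp only [oc_apply, ContinuousMap.add_apply, ContinuousMap.smul_apply, smul_eq_mul]
      push_cast
      ring
    have grp := add_le_add (add_le_add key1 key2) key3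
    exact (add_le_add (add_le_add grp grp) grp).trans (le_of_eq hQ)
  choose b U hbB hUo hxU hbound using step
  have hcover : (Set.univ : Set X) ⊆ ⋃ x, U x := fun y _ => Set.mem_iUnion.2 ⟨y, hxU y⟩
  obtain ⟨t, ht⟩ := isCompact_univ.elim_finite_subcover U hUo hcover
  have ht' : (Set.univ : Set X) ⊆ ⋃ i : ↥t, U ↑i := by
    intro y hy
    obtain ⟨x, hx, hyx⟩ := Set.mem_iUnion₂.mp (ht hy)
    exact Set.mem_iUnion.2 ⟨⟨x, hx⟩, hyx⟩
  obtain ⟨pou, hpou⟩ := PartitionOfUnity.exists_isSubordinate isClosed_univ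
    (fun i : ↥t => U ↑i) (fun i => hUo ↑i) ht'
  have hg0 : ∀ (j : ↥t) (y : X), 0 ≤ pou j y := fun j y => pou.nonneg j y
  have hgsupp : ∀ (j : ↥t) (y : X), y ∉ U ↑j → pou j y = 0 := by
    intro j y hy
    exact image_eq_zero_of_notMem_tsupport fun hmem => hy (hpou j hmem)
  have hsum_g : ∑ j : ↥t, (pou j : C(X,ℝ)) = 1 := by
    ext y
    rw [ContinuousMap.sum_apply]
    have := pou.sum_eq_one (Set.mem_univ y)
    rwa [finsum_eq_sum_of_fintype] at this
  have hoc_sum : ∀ (v : ↥t → C(X,ℝ)), ∑ j, oc (v j) = oc (∑ j, v j) := by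
    intro v
    ext y
    simp only [ContinuousMap.sum_apply, oc_apply]
    push_cast
    rfl
  -- the averaging element
  set q : ↥t → A := fun j => η (oc (pou j)) with hq
  have hq_sum : ∑ j, q j = 1 := by
    rw [hq]
    calc ∑ j : ↥t, η (oc (pou j)) = η (∑ j : ↥t, oc (pou j)) := (map_sum η _ _).symm
      _ = η (oc (∑ j : ↥t, (pou j : C(X,ℝ)))) := by rw [hoc_sum]
      _ = 1 := by rw [hsum_g, oc_one, map_one]
  set bb : A := ∑ j : ↥t, q j * b ↑j with hbb
  have hbbB : bb ∈ B := by
    rw [hbb]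
    exact sum_mem fun j _ => B.mul_mem_left _ _ (hbB ↑j)
  have hmm : a - bb = ∑ j : ↥t, q j * (a - b ↑j) := by
    calc a - bb = (∑ j : ↥t, q j) * a - bb := by rw [hq_sum, one_mul]
      _ = (∑ j : ↥t, q j * a) - ∑ j : ↥t, q j * b ↑j := by rw [Finset.sum_mul, hbb]
      _ = ∑ j : ↥t, (q j * a - q j * b ↑j) := (Finset.sum_sub_distrib _ _).symm
      _ = ∑ j : ↥t, q j * (a - b ↑j) := by simp [mul_sub]
  set F : ↥t → ↥t → A :=
    fun j k => star (a - b ↑j) * η (oc (pou j * pou k)) * (a - b ↑k) with hF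
  set G : ↥t → ↥t → A :=
    fun j k => star (a - b ↑j) * η (oc (pou j * pou k)) * (a - b ↑j) with hG
  have hstarm : star (a - bb) = ∑ j : ↥t, star (a - b ↑j) * q j := by
    rw [hmm, star_sum]
    refine Finset.sum_congr rfl fun j _ => ?_
    rw [star_mul, etar_star]
  have hmsq : star (a - bb) * (a - bb) = ∑ j : ↥t, ∑ k : ↥t, F j k := by
    rw [hstarm]
    nth_rewrite 1 [hmm]
    rw [Finset.sum_mul_sum]
    refine Finset.sum_congr rfl fun j _ => Finset.sum_congr rfl fun k _ => ?_
    rw [hF]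
    simp only []
    rw [← etar_mul η (pou j) (pou k)]
    noncomm_ring
  have hFG : ∀ j ∈ (Finset.univ : Finset ↥t), ∀ k ∈ (Finset.univ : Finset ↥t),
      F j k + F k j ≤ G j k + G k j := by
    intro j _ k _
    have hprod0 : ∀ y, 0 ≤ (pou j * pou k) y := fun y =>
      mul_nonneg (hg0 j y) (hg0 k y)
    have hrs := etar_sq η (pou j * pou k) hprod0
    have hcomm : (pou k : C(X,ℝ)) * pou j = pou j * pou k := mul_comm _ _
    have hp := pair_le (η (oc (sqC (pou j * pou k)))) (a - b ↑j) (a - b ↑k)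
    rw [hrs] at hp
    simpa only [hF, hG, hcomm] using hp
  have h1 : star (a - bb) * (a - bb) ≤ ∑ j : ↥t, ∑ k : ↥t, G j k := by
    rw [hmsq]
    exact double_sum_le Finset.univ F G hFG
  have h2 : ∀ j : ↥t, ∑ k : ↥t, G j k = star (a - b ↑j) * q j * (a - b ↑j) := by
    intro j
    have hinner : ∑ k : ↥t, η (oc (pou j * pou k)) = q j := by
      calc ∑ k : ↥t, η (oc (pou j * pou k)) = η (∑ k : ↥t, oc (pou j * pou k)) :=
          (map_sum η _ _).symm
        _ = η (oc (∑ k : ↥t, (pou j : C(X,ℝ)) * pou k)) := by rw [hoc_sum]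
        _ = η (oc ((pou j : C(X,ℝ)) * ∑ k : ↥t, (pou k : C(X,ℝ)))) := by
            rw [Finset.mul_sum]
        _ = q j := by rw [hsum_g, mul_one, hq]
    calc ∑ k : ↥t, G j k
        = star (a - b ↑j) * (∑ k : ↥t, η (oc (pou j * pou k))) * (a - b ↑j) := by
          rw [Finset.mul_sum, Finset.sum_mul]
      _ = star (a - b ↑j) * q j * (a - b ↑j) := by rw [hinner]
  have h3 : ∀ j : ↥t, star (a - b ↑j) * q j * (a - b ↑j) ≤ η (oc ((ε*ε) • (pou j : C(X,ℝ)))) :=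
    fun j => hbound ↑j (pou j) (hg0 j) (hgsupp j)
  have h4 : star (a - bb) * (a - bb) ≤ (ε*ε) • (1:A) := by
    refine h1.trans ?_
    have h5 : ∑ j : ↥t, ∑ k : ↥t, G j k ≤ ∑ j : ↥t, η (oc ((ε*ε) • (pou j : C(X,ℝ)))) :=
      Finset.sum_le_sum fun j _ => le_of_le_of_eq (le_of_eq (h2 j)) rfl |>.trans (h3 j)
    refine h5.trans (le_of_eq ?_)
    calc ∑ j : ↥t, η (oc ((ε*ε) • (pou j : C(X,ℝ))))
        = η (oc (∑ j : ↥t, (ε*ε) • (pou j : C(X,ℝ)))) := by rw [← map_sum, hoc_sum]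
      _ = η (oc ((ε*ε) • ∑ j : ↥t, (pou j : C(X,ℝ)))) := by rw [Finset.smul_sum]
      _ = (ε*ε) • (1:A) := by rw [hsum_g, etar_smul, oc_one, map_one]
  have hnorm : ‖a - bb‖ ≤ ε := norm_le_of_sq_le (a - bb) ε hε.le h4
  exact ⟨bb, hbbB, hnorm⟩

end AlphaSimpleAux2

open AlphaSimpleAux AlphaSimpleAux2

/-- Let `X` be a compact Hausdorff space, `A` a unital C*-algebra, and
`η : C(X, ℂ) → A` a unital *-homomorphism with central range.  For `x ∈ X` let `I x` be the
smallest closed two-sided ideal of `A` containing `{η f : f x = 0}`.  Assume that `A` is a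
continuous `C(X)`-algebra (i.e. `x ↦ dist(a, I x)` is continuous for all `a`), that all fibers
are nonzero (`I x ≠ A`), and that all fibers are simple (the only closed two-sided ideals
containing `I x` are `I x` and `A`).  If `h : X → X` is a minimal homeomorphism and `α` is a
*-automorphism of `A` lying over `h`, then the only closed two-sided ideals `B` of `A` with
`α(B) = B` are `{0}` and `A`. -/
theorem alphaSimple_of_continuous_simple_fibers
    {X : Type*} [TopologicalSpace X] [CompactSpace X] [T2Space X]
    {A : Type*} [CStarAlgebra A]
    (η : C(X, ℂ) →⋆ₐ[ℂ] A) (hcentral : ∀ (f : C(X, ℂ)) (a : A), η f * a = a * η f)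
    (I : X → TwoSidedIdeal A)
    (hIclosed : ∀ x, IsClosed (I x : Set A))
    (hIcontains : ∀ x, ∀ f : C(X, ℂ), f x = 0 → η f ∈ I x)
    (hIsmallest : ∀ x, ∀ K : TwoSidedIdeal A, IsClosed (K : Set A) →
      (∀ f : C(X, ℂ), f x = 0 → η f ∈ K) → I x ≤ K)
    (hcont : ∀ a : A, Continuous fun x => Metric.infDist a (I x : Set A))
    (hproper : ∀ x, I x ≠ ⊤)
    (hsimple : ∀ x, ∀ K : TwoSidedIdeal A, IsClosed (K : Set A) → I x ≤ K → K = I x ∨ K = ⊤)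
    (h : X ≃ₜ X) (hmin : ∀ Y : Set X, IsClosed Y → ⇑h '' Y = Y → Y = ∅ ∨ Y = Set.univ)
    (α : A ≃⋆ₐ[ℂ] A)
    (hover : ∀ f : C(X, ℂ), α (η f) = η (f.comp (h.symm : C(X, X)))) :
    ∀ B : TwoSidedIdeal A, IsClosed (B : Set A) → ⇑α '' (B : Set A) = (B : Set A) →
      B = ⊥ ∨ B = ⊤ := by
  intro B hBclosed hBinv
  letI : PartialOrder A := CStarAlgebra.spectralOrder A
  letI : StarOrderedRing A := CStarAlgebra.spectralOrderedRing A
  have hαcont : Continuous ⇑α := (StarAlgEquiv.isometry α).continuous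
  have hαscont : Continuous ⇑α.symm := (StarAlgEquiv.isometry α.symm).continuous
  -- α maps I x onto I (h x)
  have hfwd : ∀ x, ∀ a ∈ I x, α a ∈ I (h x) := by
    intro x
    let K : TwoSidedIdeal A := TwoSidedIdeal.mk' (⇑α ⁻¹' (I (h x) : Set A))
      (by simp only [Set.mem_preimage, map_zero]; exact (I (h x)).zero_mem)
      (fun {a b} hya hyb => by
        simp only [Set.mem_preimage, map_add] at *
        exact (I (h x)).add_mem hya hyb)
      (fun {a} hya => by
        simp only [Set.mem_preimage, map_neg] at *
        exact (I (h x)).neg_mem hya)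
      (fun {c y} hy => by
        simp only [Set.mem_preimage, map_mul] at *
        exact (I (h x)).mul_mem_left _ _ hy)
      (fun {y c} hy => by
        simp only [Set.mem_preimage, map_mul] at *
        exact (I (h x)).mul_mem_right _ _ hy)
    have hKc : IsClosed (K : Set A) := by
      rw [TwoSidedIdeal.coe_mk']
      exact (hIclosed (h x)).preimage hαcont
    have hKgen : ∀ f : C(X, ℂ), f x = 0 → η f ∈ K := by
      intro f hf
      rw [TwoSidedIdeal.mem_mk', Set.mem_preimage, hover f]
      refine hIcontains (h x) _ ?_
      simp [hf]
    intro a haI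
    have := hIsmallest x K hKc hKgen haI
    rwa [TwoSidedIdeal.mem_mk', Set.mem_preimage] at this
  have hbwd : ∀ x, ∀ a ∈ I (h x), α.symm a ∈ I x := by
    intro x
    let K : TwoSidedIdeal A := TwoSidedIdeal.mk' (⇑α.symm ⁻¹' (I x : Set A))
      (by simp only [Set.mem_preimage, map_zero]; exact (I x).zero_mem)
      (fun {a b} hya hyb => by
        simp only [Set.mem_preimage, map_add] at *
        exact (I x).add_mem hya hyb)
      (fun {a} hya => by
        simp only [Set.mem_preimage, map_neg] at *
        exact (I x).neg_mem hya)
      (fun {c y} hy => by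
        simp only [Set.mem_preimage, map_mul] at *
        exact (I x).mul_mem_left _ _ hy)
      (fun {y c} hy => by
        simp only [Set.mem_preimage, map_mul] at *
        exact (I x).mul_mem_right _ _ hy)
    have hKc : IsClosed (K : Set A) := by
      rw [TwoSidedIdeal.coe_mk']
      exact (hIclosed x).preimage hαscont
    have hKgen : ∀ f : C(X, ℂ), f (h x) = 0 → η f ∈ K := by
      intro f hf
      rw [TwoSidedIdeal.mem_mk', Set.mem_preimage]
      have e : α.symm (η f) = η (f.comp (h : C(X, X))) := by
        have e2 : α (η (f.comp (h : C(X, X)))) = η f := by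
          rw [hover]
          congr 1
          ext y
          simp
        rw [← e2, StarAlgEquiv.symm_apply_apply]
      rw [e]
      refine hIcontains x _ ?_
      simp [hf]
    intro a haI
    have := hIsmallest (h x) K hKc hKgen haI
    rwa [TwoSidedIdeal.mem_mk', Set.mem_preimage] at this
  have hαI : ∀ x, ⇑α '' (I x : Set A) = (I (h x) : Set A) := by
    intro x
    apply Set.eq_of_subset_of_subset
    · rintro _ ⟨z, hz, rfl⟩
      exact hfwd x z hz
    · intro z hz
      exact ⟨α.symm z, hbwd x z hz, α.apply_symm_apply z⟩
  -- the invariant set Y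
  set Y : Set X := {x | (B : Set A) ⊆ (I x : Set A)} with hY
  have hYmem : ∀ x, x ∈ Y ↔ ∀ a ∈ B, Metric.infDist a (I x : Set A) = 0 := by
    intro x
    constructor
    · intro hx a haB
      exact Metric.infDist_zero_of_mem (hx haB)
    · intro hx a haB
      have h0 : a ∈ closure (I x : Set A) :=
        (Metric.mem_closure_iff_infDist_zero ⟨0, (I x).zero_mem⟩).2 (hx a haB)
      rwa [(hIclosed x).closure_eq] at h0
  have hYclosed : IsClosed Y := by
    have : Y = ⋂ (a : A) (_ : a ∈ B), (fun x => Metric.infDist a (I x : Set A)) ⁻¹' {0} := by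
      ext x
      simp only [Set.mem_iInter, Set.mem_preimage, Set.mem_singleton_iff]
      exact hYmem x
    rw [this]
    exact isClosed_iInter fun a => isClosed_iInter fun _ =>
      IsClosed.preimage (hcont a) isClosed_singleton
  have hBinv' : ∀ z, z ∈ B ↔ α z ∈ B := by
    intro z
    constructor
    · intro hz
      have : α z ∈ ⇑α '' (B : Set A) := ⟨z, hz, rfl⟩
      rwa [hBinv] at this
    · intro hz
      have h2 : α z ∈ ⇑α '' (B : Set A) := by rw [hBinv]; exact hz
      obtain ⟨w, hwB, hwz⟩ := h2
      rwa [← α.injective hwz]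
  have hYiff : ∀ x, x ∈ Y ↔ h x ∈ Y := by
    intro x
    constructor
    · intro hx z hzB
      rw [← hαI x]
      have hzB' : α.symm z ∈ B := by
        rw [hBinv' (α.symm z), α.apply_symm_apply]; exact hzB
      exact ⟨α.symm z, hx hzB', α.apply_symm_apply z⟩
    · intro hx z hzB
      have : α z ∈ (I (h x) : Set A) := hx ((hBinv' z).1 hzB)
      rw [← hαI x] at this
      obtain ⟨w, hwI, hwz⟩ := this
      rwa [← α.injective hwz]
  have hYinv : ⇑h '' Y = Y := by
    ext y
    constructor
    · rintro ⟨x, hx, rfl⟩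
      exact (hYiff x).1 hx
    · intro hy
      refine ⟨h.symm y, ?_, h.apply_symm_apply y⟩
      apply (hYiff (h.symm y)).2
      rwa [h.apply_symm_apply]
  rcases hmin Y hYclosed hYinv with hYe | hYu
  · -- Y empty : B = ⊤
    right
    apply TwoSidedIdeal.eq_top
    refine key η hcentral I hIsmallest B hBclosed 1 ?_
    intro x
    -- the closed ideal generated by B + I x is everything
    have hxY : x ∉ Y := by rw [hYe]; exact Set.notMem_empty x
    obtain ⟨b0, hb0B, hb0I⟩ : ∃ b0 ∈ B, b0 ∉ I x := by
      by_contra hc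
      push_neg at hc
      exact hxY fun {z} hz => hc z hz
    set S : Set A := {y : A | ∃ b ∈ B, ∃ c ∈ I x, y = b + c} with hS
    have hSadd : ∀ {u v : A}, u ∈ S → v ∈ S → u + v ∈ S := by
      rintro u v ⟨b1, hb1, c1, hc1, rfl⟩ ⟨b2, hb2, c2, hc2, rfl⟩
      exact ⟨b1 + b2, B.add_mem hb1 hb2, c1 + c2, (I x).add_mem hc1 hc2, by abel⟩
    have hSneg : ∀ {u : A}, u ∈ S → -u ∈ S := by
      rintro u ⟨b1, hb1, c1, hc1, rfl⟩
      exact ⟨-b1, B.neg_mem hb1, -c1, (I x).neg_mem hc1, by abel⟩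
    have hSml : ∀ (c : A) {z : A}, z ∈ S → c * z ∈ S := by
      rintro c z ⟨b1, hb1, c1, hc1, rfl⟩
      exact ⟨c * b1, B.mul_mem_left _ _ hb1, c * c1, (I x).mul_mem_left _ _ hc1, mul_add c b1 c1⟩
    have hSmr : ∀ (c : A) {z : A}, z ∈ S → z * c ∈ S := by
      rintro c z ⟨b1, hb1, c1, hc1, rfl⟩
      exact ⟨b1 * c, B.mul_mem_right _ _ hb1, c1 * c, (I x).mul_mem_right _ _ hc1,
        add_mul b1 c1 c⟩
    let K : TwoSidedIdeal A := TwoSidedIdeal.mk' (closure S)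
      (subset_closure ⟨0, B.zero_mem, 0, (I x).zero_mem, (add_zero 0).symm⟩)
      (fun hu hv => map_mem_closure₂ continuous_add hu hv fun a ha b hb => hSadd ha hb)
      (fun hu => map_mem_closure continuous_neg hu fun a ha => hSneg ha)
      (fun {c y} hy => map_mem_closure (continuous_mul_left c) hy fun z hz => hSml c hz)
      (fun {y c} hy => map_mem_closure (f := fun z => z * c) (continuous_mul_right c) hy
        fun z hz => hSmr c hz)
    have hKc : IsClosed (K : Set A) := by
      rw [TwoSidedIdeal.coe_mk']; exact isClosed_closure
    have hKI : I x ≤ K := by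
      refine hIsmallest x K hKc ?_
      intro f hf
      rw [TwoSidedIdeal.mem_mk']
      exact subset_closure ⟨0, B.zero_mem, η f, hIcontains x f hf, (zero_add _).symm⟩
    rcases hsimple x K hKc hKI with hKeq | hKtop
    · exfalso
      apply hb0I
      have : b0 ∈ K := by
        rw [TwoSidedIdeal.mem_mk']
        exact subset_closure ⟨b0, hb0B, 0, (I x).zero_mem, (add_zero _).symm⟩
      rwa [hKeq] at this
    · have h1K : (1:A) ∈ K := by rw [hKtop]; trivial
      rwa [TwoSidedIdeal.mem_mk'] at h1K
  · -- Y = univ : B = ⊥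
    left
    rw [eq_bot_iff]
    intro z hzB
    have hbotc : IsClosed ((⊥ : TwoSidedIdeal A) : Set A) := by
      have : ((⊥ : TwoSidedIdeal A) : Set A) = {0} := by
        ext w
        simp [SetLike.mem_coe, TwoSidedIdeal.mem_bot]
      rw [this]
      exact isClosed_singleton
    refine key η hcentral I hIsmallest ⊥ hbotc z ?_
    intro x
    have hxY : x ∈ Y := by rw [hYu]; trivial
    refine subset_closure ⟨0, by simp [TwoSidedIdeal.mem_bot], z, hxY hzB, (zero_add z).symm⟩
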